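/- Let f be a face of the spectrahedron F = {X ⪰ 0 : A(X) = b} that contains a nondegenerate point of F. Then every point in the relative interior of f is a nondegenerate point of F. -/

import Mathlib

open Matrix Set

noncomputable section

/-- The linear map `A X = (⟨Aᵢ, X⟩)ᵢ` (trace inner product). -/
def calA {n m : ℕ} (A : Fin m → Matrix (Fin n) (Fin n) ℝ)
    (X : Matrix (Fin n) (Fin n) ℝ) : Fin m → ℝ := fun i => (A i * X).trace

/-- The adjoint map `A* λ = ∑ᵢ λᵢ Aᵢ`. -/
def adjA {n m : ℕ} (A : Fin m → Matrix (Fin n) (Fin n) ℝ) (lam : Fin m → ℝ) :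
    Matrix (Fin n) (Fin n) ℝ := ∑ i, lam i • A i

/-- The spectrahedron `F = {X ⪰ 0 : A X = b}`. -/
def spectra {n m : ℕ} (A : Fin m → Matrix (Fin n) (Fin n) ℝ) (b : Fin m → ℝ) :
    Set (Matrix (Fin n) (Fin n) ℝ) := {X | X.PosSemidef ∧ calA A X = b}

/-- The PSD cone `Sⁿ₊` as a subset of matrix space. -/
def PSDcone (n : ℕ) : Set (Matrix (Fin n) (Fin n) ℝ) := {Y | Y.PosSemidef}

/-- `f` is a face of the convex cone `K`. -/
def IsFaceOfCone {k : ℕ} (f K : Set (Matrix (Fin k) (Fin k) ℝ)) : Prop :=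
  f ⊆ K ∧ Convex ℝ f ∧ (∀ c : ℝ, 0 ≤ c → ∀ x ∈ f, c • x ∈ f) ∧
    ∀ x ∈ K, ∀ y ∈ K, x + y ∈ f → x ∈ f ∧ y ∈ f

/-- `face(X, Sⁿ₊)`: the minimal face of `Sⁿ₊` containing `X`, i.e. the intersection of
all faces of `Sⁿ₊` containing `X`. -/
def minFaceOfPoint {n : ℕ} (X : Matrix (Fin n) (Fin n) ℝ) :
    Set (Matrix (Fin n) (Fin n) ℝ) :=
  ⋂₀ {g | IsFaceOfCone g (PSDcone n) ∧ X ∈ g}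

/-- The conjugate face `f^Δ = f^⊥ ∩ Sⁿ₊` of a subset `f` of `Sⁿ₊`. -/
def conjFace {n : ℕ} (f : Set (Matrix (Fin n) (Fin n) ℝ)) :
    Set (Matrix (Fin n) (Fin n) ℝ) :=
  {Z | Z.PosSemidef ∧ ∀ Y ∈ f, (Y * Z).trace = 0}

/-- `X` is a nondegenerate point: `span(face(X,Sⁿ₊)^Δ) ∩ range(A*) = {0}`. -/
def Nondegenerate {n m : ℕ} (A : Fin m → Matrix (Fin n) (Fin n) ℝ)
    (X : Matrix (Fin n) (Fin n) ℝ) : Prop :=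
  Submodule.span ℝ (conjFace (minFaceOfPoint X)) ⊓ Submodule.span ℝ (Set.range A) = ⊥

/-- `f` is a face of the convex set `C`: a convex subset such that whenever a point of `f`
lies in the open segment between two points of `C`, both endpoints belong to `f`. -/
def IsFaceOfConvexSet {n : ℕ} (f C : Set (Matrix (Fin n) (Fin n) ℝ)) : Prop :=
  f ⊆ C ∧ Convex ℝ f ∧
    ∀ x ∈ C, ∀ y ∈ C, ∀ t : ℝ, t ∈ Set.Ioo (0 : ℝ) 1 →
      t • x + (1 - t) • y ∈ f → x ∈ f ∧ y ∈ f


lemma psdSmul {n : ℕ} {c : ℝ} (hc : 0 ≤ c) {M : Matrix (Fin n) (Fin n) ℝ}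
    (hM : M.PosSemidef) : (c • M).PosSemidef := by
  refine ⟨?_, fun x => ?_⟩
  · unfold Matrix.IsHermitian
    rw [Matrix.conjTranspose_smul, hM.1]
    simp
  · convert mul_nonneg hc (hM.2 x) using 1
    unfold Finsupp.sum
    simp only [Finset.mul_sum, Matrix.smul_apply, smul_eq_mul]
    exact Finset.sum_congr rfl fun _ _ => Finset.sum_congr rfl fun _ _ => by ring

lemma extend {n : ℕ} {s : Set (Matrix (Fin n) (Fin n) ℝ)} {X Y : Matrix (Fin n) (Fin n) ℝ}
    (hX : X ∈ intrinsicInterior ℝ s) (hY : Y ∈ s) :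
    ∃ δ : ℝ, 0 < δ ∧ X + δ • (X - Y) ∈ s := by
  obtain ⟨x', hx', hco⟩ := hX
  rw [mem_interior_iff_mem_nhds] at hx'
  have hXa : X ∈ affineSpan ℝ s := hco ▸ x'.2
  have hYa : Y ∈ affineSpan ℝ s := subset_affineSpan ℝ s hY
  have hspan : ∀ t : ℝ, X + t • (X - Y) ∈ affineSpan ℝ s := by
    intro t
    have := AffineSubspace.smul_vsub_vadd_mem (affineSpan ℝ s) t hXa hYa hXa
    simpa [vsub_eq_sub, vadd_eq_add, add_comm] using this
  set γ : ℝ → affineSpan ℝ s := fun t => ⟨X + t • (X - Y), hspan t⟩ with hγdef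
  have hγ : Continuous γ := Continuous.subtype_mk (by continuity) _
  have h0 : γ 0 = x' := Subtype.ext (by simp [hγdef, hco])
  have hpre : γ ⁻¹' ((↑) ⁻¹' s) ∈ nhds (0 : ℝ) := by
    apply hγ.continuousAt.preimage_mem_nhds
    rw [h0]; exact hx'
  rw [Metric.mem_nhds_iff] at hpre
  obtain ⟨ε, hε, hball⟩ := hpre
  refine ⟨ε / 2, by positivity, ?_⟩
  have : (ε / 2) ∈ Metric.ball (0 : ℝ) ε := by
    rw [Metric.mem_ball, Real.dist_eq, sub_zero, abs_of_pos (by positivity)]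
    linarith
  exact hball this

lemma psdcone_face (n : ℕ) : IsFaceOfCone (PSDcone n) (PSDcone n) := by
  refine ⟨subset_rfl, ?_, ?_, ?_⟩
  · intro x hx y hy a b ha hb _
    exact (psdSmul ha hx).add (psdSmul hb hy)
  · intro c hc x hx; exact psdSmul hc hx
  · intro x hx y hy _; exact ⟨hx, hy⟩

lemma minFace_isFace {n : ℕ} {X : Matrix (Fin n) (Fin n) ℝ} (hX : X.PosSemidef) :
    IsFaceOfCone (minFaceOfPoint X) (PSDcone n) := by
  refine ⟨?_, ?_, ?_, ?_⟩
  · exact fun Z hZ => Set.mem_sInter.1 hZ _ ⟨psdcone_face n, hX⟩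
  · exact convex_sInter fun g hg => hg.1.2.1
  · intro c hc x hx
    exact Set.mem_sInter.2 fun g hg => hg.1.2.2.1 c hc x (Set.mem_sInter.1 hx g hg)
  · intro x hx y hy hsum
    constructor <;> refine Set.mem_sInter.2 fun g hg => ?_
    · exact (hg.1.2.2.2 x hx y hy (Set.mem_sInter.1 hsum g hg)).1
    · exact (hg.1.2.2.2 x hx y hy (Set.mem_sInter.1 hsum g hg)).2

lemma mem_minFace_of_seg {n : ℕ} {X Y Z : Matrix (Fin n) (Fin n) ℝ}
    (hY : Y.PosSemidef) (hZ : Z.PosSemidef) {t : ℝ} (ht0 : 0 < t) (ht1 : t < 1)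
    (hXeq : t • Z + (1 - t) • Y = X) : Y ∈ minFaceOfPoint X := by
  refine Set.mem_sInter.2 fun g hg => ?_
  obtain ⟨⟨hgsub, hconv, hcone, hadd⟩, hXg⟩ := hg
  have h1t : (0:ℝ) < 1 - t := by linarith
  have h1 := hadd _ (psdSmul ht0.le hZ) _ (psdSmul h1t.le hY) (by rw [hXeq]; exact hXg)
  have h2 := hcone (1 - t)⁻¹ (by positivity) _ h1.2
  rwa [smul_smul, inv_mul_cancel₀ h1t.ne', one_smul] at h2

/-- if a face `f` of the spectrahedron `F` contains a nondegenerate point of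
`F`, then every point in the relative interior of `f` is a nondegenerate point of `F`. -/
theorem stmt15 {n m : ℕ} (A : Fin m → Matrix (Fin n) (Fin n) ℝ)
    (hA : ∀ i, (A i).IsSymm) (hLI : LinearIndependent ℝ A) (b : Fin m → ℝ)
    (hFne : (spectra A b).Nonempty)
    (f : Set (Matrix (Fin n) (Fin n) ℝ))
    (hface : IsFaceOfConvexSet f (spectra A b))
    (hnd : ∃ X ∈ f, Nondegenerate A X) :
    ∀ X ∈ intrinsicInterior ℝ f, Nondegenerate A X := by
  obtain ⟨Y, hYf, hYnd⟩ := hnd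
  intro X hXint
  have hXf : X ∈ f := intrinsicInterior_subset hXint
  obtain ⟨hfsub, hfconv, hfface⟩ := hface
  obtain ⟨δ, hδ, hZf⟩ := extend hXint hYf
  set Z := X + δ • (X - Y) with hZdef
  have hδ1 : (0:ℝ) < 1 + δ := by linarith
  set t : ℝ := 1 / (1 + δ) with htdef
  have ht0 : 0 < t := by positivity
  have ht1 : t < 1 := by rw [htdef, div_lt_one hδ1]; linarith
  have ht : t * (1 + δ) = 1 := by rw [htdef]; field_simp
  have hXeq : t • Z + (1 - t) • Y = X := by
    rw [hZdef]
    match_scalars <;> nlinarith [ht]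
  have hYmin : Y ∈ minFaceOfPoint X :=
    mem_minFace_of_seg (hfsub hYf).1 (hfsub hZf).1 ht0 ht1 hXeq
  have hsub : minFaceOfPoint Y ⊆ minFaceOfPoint X :=
    Set.sInter_subset_of_mem ⟨minFace_isFace (hfsub hXf).1, hYmin⟩
  have hconj : conjFace (minFaceOfPoint X) ⊆ conjFace (minFaceOfPoint Y) :=
    fun W hW => ⟨hW.1, fun V hV => hW.2 V (hsub hV)⟩
  exact le_bot_iff.mp
    (le_trans (inf_le_inf_right _ (Submodule.span_mono hconj)) (le_of_eq hYnd))
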